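/- arXiv:1101.5070 — 3 statements merged into one kernel-verified Lean document; each statement's English description precedes it below -/
import Mathlib

section
/- Let p(t) = t^8 + a1 t^7 + a2 t^6 + a3 t^5 + a4 t^4 + q a3 t^3 + q^2 a2 t^2 + q^3 a1 t + q^4 be a Weil polynomial (all complex roots of absolute value √q, q > 0) with no real roots. Then |a1| < 8√q and 6√q|a1| - 20q < a2 ≤ 3a1²/8 + 4q. -/
open Polynomial

private lemma multiset_card_eq_four' {α : Type*} {s : Multiset α} (h : Multiset.card s = 4) :
    ∃ a b c d, s = {a, b, c, d} := by
  have hne : s ≠ 0 := by rintro rfl; simp at h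
  obtain ⟨a, ha⟩ := Multiset.exists_mem_of_ne_zero hne
  obtain ⟨t, rfl⟩ := Multiset.exists_cons_of_mem ha
  simp only [Multiset.card_cons] at h
  have h3 : Multiset.card t = 3 := by omega
  obtain ⟨b, c, d, rfl⟩ := Multiset.card_eq_three.mp h3
  exact ⟨a, b, c, d, rfl⟩

private lemma conj_pair_quad' (z : ℂ) (q : ℝ) (h : z.re ^ 2 + z.im ^ 2 = q) :
    (X - C z) * (X - C ((starRingEnd ℂ) z)) =
      X ^ 2 - C ((2 * z.re : ℝ) : ℂ) * X + C ((q : ℝ) : ℂ) := by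
  have h1 : z + (starRingEnd ℂ) z = ((2 * z.re : ℝ) : ℂ) := by
    rw [Complex.add_conj]
  have h2 : z * (starRingEnd ℂ) z = ((q : ℝ) : ℂ) := by
    rw [Complex.mul_conj]; congr 1; rw [Complex.normSq_apply, ← h]; ring
  rw [← h1, ← h2]
  simp only [map_add, map_mul]
  ring

private lemma quad_prod_expand' (x1 x2 x3 x4 q : ℝ) :
    (X ^ 2 - C x1 * X + C q) * (X ^ 2 - C x2 * X + C q) * (X ^ 2 - C x3 * X + C q)
        * (X ^ 2 - C x4 * X + C q)
    = X ^ 8 + C (-(x1 + x2 + x3 + x4)) * X ^ 7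
        + C ((x1*x2 + x1*x3 + x1*x4 + x2*x3 + x2*x4 + x3*x4) + 4*q) * X ^ 6
        + C (-((x1*x2*x3 + x1*x2*x4 + x1*x3*x4 + x2*x3*x4) + 3*q*(x1+x2+x3+x4))) * X ^ 5
        + C (x1*x2*x3*x4 + 2*q*(x1*x2 + x1*x3 + x1*x4 + x2*x3 + x2*x4 + x3*x4) + 6*q^2) * X ^ 4
        + C (q * (-((x1*x2*x3 + x1*x2*x4 + x1*x3*x4 + x2*x3*x4) + 3*q*(x1+x2+x3+x4)))) * X ^ 3
        + C (q ^ 2 * ((x1*x2 + x1*x3 + x1*x4 + x2*x3 + x2*x4 + x3*x4) + 4*q)) * X ^ 2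
        + C (q ^ 3 * (-(x1+x2+x3+x4))) * X + C (q ^ 4) := by
  simp only [map_add, map_mul, map_neg, map_pow, map_ofNat, C_1]
  ring

private lemma weil_arith' (q c a1 a2 x1 x2 x3 x4 : ℝ) (hq : 0 < q) (hc : 0 < c)
    (hcq : c ^ 2 = q)
    (ha1 : a1 = -(x1 + x2 + x3 + x4))
    (ha2 : a2 = (x1*x2 + x1*x3 + x1*x4 + x2*x3 + x2*x4 + x3*x4) + 4*q)
    (hu1 : x1 < 2 * c) (hu2 : x2 < 2 * c) (hu3 : x3 < 2 * c) (hu4 : x4 < 2 * c)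
    (hl1 : -(2 * c) < x1) (hl2 : -(2 * c) < x2) (hl3 : -(2 * c) < x3) (hl4 : -(2 * c) < x4) :
    |a1| < 8 * c ∧ 6 * c * |a1| - 20 * q < a2 ∧ a2 ≤ 3 * a1 ^ 2 / 8 + 4 * q := by
  refine ⟨?_, ?_, ?_⟩
  · rw [abs_lt]; constructor <;> linarith
  · rcases abs_cases a1 with ⟨h1, _⟩ | ⟨h1, _⟩ <;> rw [h1]
    · have p1 : (0:ℝ) < 2*c + x1 := by linarith
      have p2 : (0:ℝ) < 2*c + x2 := by linarith
      have p3 : (0:ℝ) < 2*c + x3 := by linarith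
      have p4 : (0:ℝ) < 2*c + x4 := by linarith
      nlinarith [mul_pos p1 p2, mul_pos p1 p3, mul_pos p1 p4, mul_pos p2 p3,
        mul_pos p2 p4, mul_pos p3 p4]
    · have p1 : (0:ℝ) < 2*c - x1 := by linarith
      have p2 : (0:ℝ) < 2*c - x2 := by linarith
      have p3 : (0:ℝ) < 2*c - x3 := by linarith
      have p4 : (0:ℝ) < 2*c - x4 := by linarith
      nlinarith [mul_pos p1 p2, mul_pos p1 p3, mul_pos p1 p4, mul_pos p2 p3,
        mul_pos p2 p4, mul_pos p3 p4]
  · nlinarith [sq_nonneg (x1 - x2), sq_nonneg (x1 - x3), sq_nonneg (x1 - x4),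
      sq_nonneg (x2 - x3), sq_nonneg (x2 - x4), sq_nonneg (x3 - x4)]

set_option maxHeartbeats 1000000 in
theorem weil_octic_coeff_bounds_one_two (q a1 a2 a3 a4 : ℝ) (hq : 0 < q) (P : ℝ[X])
    (hP : P = X ^ 8 + C a1 * X ^ 7 + C a2 * X ^ 6 + C a3 * X ^ 5 + C a4 * X ^ 4
        + C (q * a3) * X ^ 3 + C (q ^ 2 * a2) * X ^ 2 + C (q ^ 3 * a1) * X
        + C (q ^ 4))
    (hweil : ∀ z : ℂ, aeval z P = 0 → ‖z‖ = Real.sqrt q)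
    (hnoreal : ∀ t : ℝ, P.eval t ≠ 0) :
    |a1| < 8 * Real.sqrt q ∧
      6 * Real.sqrt q * |a1| - 20 * q < a2 ∧ a2 ≤ 3 * a1 ^ 2 / 8 + 4 * q := by
  classical
  set c := Real.sqrt q with hcdef
  have hc : 0 < c := Real.sqrt_pos.mpr hq
  have hcq : c ^ 2 = q := Real.sq_sqrt hq.le
  have hPmonic : P.Monic := by rw [hP]; monicity!
  have hPdeg : P.natDegree = 8 := by rw [hP]; compute_degree!
  set f : ℝ →+* ℂ := algebraMap ℝ ℂ with hf
  set Pc : ℂ[X] := P.map f with hPcdef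
  have hPcmonic : Pc.Monic := hPmonic.map f
  have hPcne : Pc ≠ 0 := hPcmonic.ne_zero
  have hPcdeg : Pc.natDegree = 8 := by
    rw [hPcdef, natDegree_map]; exact hPdeg
  have hsplits : Pc.Splits := IsAlgClosed.splits Pc
  set M : Multiset ℂ := Pc.roots with hM
  have hcard : Multiset.card M = 8 := by
    rw [hM, splits_iff_card_roots.mp hsplits, hPcdeg]
  have hroot : ∀ z ∈ M, aeval z P = 0 := by
    intro z hz
    have h1 := (mem_roots hPcne).mp hz
    rwa [IsRoot.def, hPcdef, eval_map, ← aeval_def] at h1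
  have habs : ∀ z ∈ M, z.re ^ 2 + z.im ^ 2 = q := by
    intro z hz
    have h1 := hweil z (hroot z hz)
    have h2 : (‖z‖) ^ 2 = c ^ 2 := by rw [h1]
    rwa [Complex.sq_norm, Complex.normSq_apply, hcq, ← sq, ← sq] at h2
  have him : ∀ z ∈ M, z.im ≠ 0 := by
    intro z hz h0
    have hz' := hroot z hz
    have hzr : z = ((z.re : ℝ) : ℂ) := Complex.ext rfl (by simp [h0])
    rw [hzr, show ((z.re : ℝ) : ℂ) = algebraMap ℝ ℂ z.re from rfl,
      aeval_algebraMap_apply_eq_algebraMap_eval] at hz'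
    exact hnoreal z.re ((map_eq_zero_iff f (RingHom.injective f)).mp hz')
  -- conjugation invariance of the roots
  have hconjP : Pc.map (starRingEnd ℂ) = Pc := by
    rw [hPcdef, map_map]
    congr 1
    exact RingHom.ext fun r => Complex.conj_ofReal r
  have hMconj : M.map (starRingEnd ℂ) = M := by
    have h1 := hsplits.roots_map_of_injective (starRingEnd ℂ).injective
    rw [hconjP] at h1
    exact h1.symm
  set M1 : Multiset ℂ := M.filter (fun z => 0 < z.im) with hM1
  have hsplit2 : M = M1 + M1.map (starRingEnd ℂ) := by
    have e1 : M.filter (fun z => ¬ 0 < z.im) = M.filter (fun z => z.im < 0) :=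
      Multiset.filter_congr fun z hz => by
        constructor
        · intro h; exact lt_of_le_of_ne (not_lt.mp h) (him z hz)
        · intro h; exact not_lt.mpr h.le
    have e2 : M.filter (fun z => z.im < 0) = M1.map (starRingEnd ℂ) := by
      conv_lhs => rw [← hMconj]
      rw [Multiset.filter_map]
      congr 1
      exact Multiset.filter_congr fun z hz => by
        simp [Function.comp, Complex.conj_im]
    conv_lhs => rw [← Multiset.filter_add_not (fun z => 0 < z.im) M]
    rw [e1, e2]
  have hcard1 : Multiset.card M1 = 4 := by
    have h1 := congrArg Multiset.card hsplit2
    rw [hcard, Multiset.card_add, Multiset.card_map] at h1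
    omega
  obtain ⟨z1, z2, z3, z4, hM1eq⟩ := multiset_card_eq_four' hcard1
  have hmem : ∀ z ∈ M1, z ∈ M := fun z hz => (Multiset.mem_filter.mp hz).1
  have hz1 : z1 ∈ M := hmem z1 (by rw [hM1eq]; simp)
  have hz2 : z2 ∈ M := hmem z2 (by rw [hM1eq]; simp)
  have hz3 : z3 ∈ M := hmem z3 (by rw [hM1eq]; simp)
  have hz4 : z4 ∈ M := hmem z4 (by rw [hM1eq]; simp)
  -- factor P into four real quadratics
  have hprod : Pc = (M.map fun z => X - C z).prod :=
    hsplits.eq_prod_roots_of_monic hPcmonic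
  have key : P = (X ^ 2 - C (2*z1.re) * X + C q) * (X ^ 2 - C (2*z2.re) * X + C q)
      * (X ^ 2 - C (2*z3.re) * X + C q) * (X ^ 2 - C (2*z4.re) * X + C q) := by
    apply map_injective f (RingHom.injective f)
    rw [← hPcdef, hprod, hsplit2, hM1eq]
    simp only [Multiset.map_add, Multiset.prod_add, Multiset.map_map, Multiset.insert_eq_cons,
      Multiset.map_cons, Multiset.prod_cons, Multiset.map_singleton, Multiset.prod_singleton,
      Function.comp]
    simp only [Polynomial.map_mul, Polynomial.map_add, Polynomial.map_sub, Polynomial.map_pow,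
      Polynomial.map_X, Polynomial.map_C]
    simp only [show ∀ x : ℝ, f x = (x : ℂ) from fun x => rfl]
    rw [← conj_pair_quad' z1 q (habs z1 hz1), ← conj_pair_quad' z2 q (habs z2 hz2),
      ← conj_pair_quad' z3 q (habs z3 hz3), ← conj_pair_quad' z4 q (habs z4 hz4)]
    ring
  set x1 : ℝ := 2 * z1.re with hx1
  set x2 : ℝ := 2 * z2.re with hx2
  set x3 : ℝ := 2 * z3.re with hx3
  set x4 : ℝ := 2 * z4.re with hx4
  have heq : X ^ 8 + C a1 * X ^ 7 + C a2 * X ^ 6 + C a3 * X ^ 5 + C a4 * X ^ 4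
        + C (q * a3) * X ^ 3 + C (q ^ 2 * a2) * X ^ 2 + C (q ^ 3 * a1) * X
        + C (q ^ 4)
      = X ^ 8 + C (-(x1 + x2 + x3 + x4)) * X ^ 7
        + C ((x1*x2 + x1*x3 + x1*x4 + x2*x3 + x2*x4 + x3*x4) + 4*q) * X ^ 6
        + C (-((x1*x2*x3 + x1*x2*x4 + x1*x3*x4 + x2*x3*x4) + 3*q*(x1+x2+x3+x4))) * X ^ 5
        + C (x1*x2*x3*x4 + 2*q*(x1*x2 + x1*x3 + x1*x4 + x2*x3 + x2*x4 + x3*x4) + 6*q^2) * X ^ 4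
        + C (q * (-((x1*x2*x3 + x1*x2*x4 + x1*x3*x4 + x2*x3*x4) + 3*q*(x1+x2+x3+x4)))) * X ^ 3
        + C (q ^ 2 * ((x1*x2 + x1*x3 + x1*x4 + x2*x3 + x2*x4 + x3*x4) + 4*q)) * X ^ 2
        + C (q ^ 3 * (-(x1+x2+x3+x4))) * X + C (q ^ 4) := by
    rw [← hP, key, quad_prod_expand']
  have ha1 : a1 = -(x1 + x2 + x3 + x4) := by
    have h := congrArg (fun p => coeff p 7) heq
    simp only [coeff_add, coeff_C_mul, coeff_mul_C, coeff_X_pow, coeff_C, coeff_X] at h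
    norm_num at h
    linarith
  have ha2 : a2 = (x1*x2 + x1*x3 + x1*x4 + x2*x3 + x2*x4 + x3*x4) + 4*q := by
    have h := congrArg (fun p => coeff p 6) heq
    simp only [coeff_add, coeff_C_mul, coeff_mul_C, coeff_X_pow, coeff_C, coeff_X] at h
    norm_num at h
    linarith
  -- bounds on the xᵢ
  have hbound : ∀ z ∈ M, (2 * z.re) ^ 2 < 4 * q := by
    intro z hz
    have h1 := habs z hz
    have h2 : 0 < z.im ^ 2 :=
      lt_of_le_of_ne (sq_nonneg _) (Ne.symm (pow_ne_zero 2 (him z hz)))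
    nlinarith
  have hb1 := hbound z1 hz1
  have hb2 := hbound z2 hz2
  have hb3 := hbound z3 hz3
  have hb4 := hbound z4 hz4
  rw [← hx1] at hb1
  rw [← hx2] at hb2
  rw [← hx3] at hb3
  rw [← hx4] at hb4
  have h4q : 4 * q = (2 * c) ^ 2 := by rw [← hcq]; ring
  rw [h4q] at hb1 hb2 hb3 hb4
  have hu1 : x1 < 2 * c := by nlinarith [sq_nonneg (x1 - 2*c)]
  have hu2 : x2 < 2 * c := by nlinarith [sq_nonneg (x2 - 2*c)]
  have hu3 : x3 < 2 * c := by nlinarith [sq_nonneg (x3 - 2*c)]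
  have hu4 : x4 < 2 * c := by nlinarith [sq_nonneg (x4 - 2*c)]
  have hl1 : -(2 * c) < x1 := by nlinarith [sq_nonneg (x1 + 2*c)]
  have hl2 : -(2 * c) < x2 := by nlinarith [sq_nonneg (x2 + 2*c)]
  have hl3 : -(2 * c) < x3 := by nlinarith [sq_nonneg (x3 + 2*c)]
  have hl4 : -(2 * c) < x4 := by nlinarith [sq_nonneg (x4 + 2*c)]
  exact weil_arith' q c a1 a2 x1 x2 x3 x4 hq hc hcq ha1 ha2 hu1 hu2 hu3 hu4 hl1 hl2 hl3 hl4
end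

section
/- Let p(t) = t^8 + a1 t^7 + a2 t^6 + a3 t^5 + a4 t^4 + q a3 t^3 + q^2 a2 t^2 + q^3 a1 t + q^4 be a Weil polynomial (q > 0) with no real roots. Then -9q a1 - 4√q a2 - 16q√q < a3 < -9q a1 + 4√q a2 + 16q√q, and -a1³/8 + a1 a2/2 + q a1 - ((2/3)(3a1²/8 - a2 + 4q))^{3/2} ≤ a3 ≤ -a1³/8 + a1 a2/2 + q a1 + ((2/3)(3a1²/8 - a2 + 4q))^{3/2}. -/
private lemma cube_helper (u1 u2 u3 u4 t : ℝ) (h0 : u1+u2+u3+u4 = 0) (ht0 : 0 ≤ t)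
    (ht : t^2 = (u1^2+u2^2+u3^2+u4^2)/12) :
    u1^3+u2^3+u3^3+u4^3 ≤ 2*(u1^2+u2^2+u3^2+u4^2)*t := by
  have hb1 : u1 ≤ 3*t := by nlinarith [sq_nonneg (u2-u3), sq_nonneg (u2-u4), sq_nonneg (u3-u4)]
  have hb2 : u2 ≤ 3*t := by nlinarith [sq_nonneg (u1-u3), sq_nonneg (u1-u4), sq_nonneg (u3-u4)]
  have hb3 : u3 ≤ 3*t := by nlinarith [sq_nonneg (u1-u2), sq_nonneg (u1-u4), sq_nonneg (u2-u4)]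
  have hb4 : u4 ≤ 3*t := by nlinarith [sq_nonneg (u1-u2), sq_nonneg (u1-u3), sq_nonneg (u2-u3)]
  have hsum : (u1+t)^2*(u1-3*t) + (u2+t)^2*(u2-3*t) + (u3+t)^2*(u3-3*t)
      + (u4+t)^2*(u4-3*t) ≤ 0 := by
    have h1 := mul_nonpos_of_nonneg_of_nonpos (sq_nonneg (u1+t)) (by linarith : u1-3*t ≤ 0)
    have h2 := mul_nonpos_of_nonneg_of_nonpos (sq_nonneg (u2+t)) (by linarith : u2-3*t ≤ 0)
    have h3 := mul_nonpos_of_nonneg_of_nonpos (sq_nonneg (u3+t)) (by linarith : u3-3*t ≤ 0)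
    have h4 := mul_nonpos_of_nonneg_of_nonpos (sq_nonneg (u4+t)) (by linarith : u4-3*t ≤ 0)
    linarith
  nlinarith [hsum, ht, h0, mul_self_nonneg t]

private lemma cube_sum_bound (u1 u2 u3 u4 : ℝ) (h0 : u1+u2+u3+u4 = 0) :
    3*(u1^3+u2^3+u3^3+u4^3)^2 ≤ (u1^2+u2^2+u3^2+u4^2)^3 := by
  have hq0 : (0:ℝ) ≤ u1^2+u2^2+u3^2+u4^2 := by positivity
  have ht0 : 0 ≤ Real.sqrt ((u1^2+u2^2+u3^2+u4^2)/12) := Real.sqrt_nonneg _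
  have ht : (Real.sqrt ((u1^2+u2^2+u3^2+u4^2)/12))^2 = (u1^2+u2^2+u3^2+u4^2)/12 :=
    Real.sq_sqrt (by positivity)
  have hup := cube_helper u1 u2 u3 u4 _ h0 ht0 ht
  have hdn := cube_helper (-u1) (-u2) (-u3) (-u4) (Real.sqrt ((u1^2+u2^2+u3^2+u4^2)/12))
    (by linarith) ht0 (by rw [ht]; ring)
  nlinarith [mul_nonneg
      (by nlinarith [hup] : (0:ℝ) ≤ 2*(u1^2+u2^2+u3^2+u4^2)*Real.sqrt ((u1^2+u2^2+u3^2+u4^2)/12) - (u1^3+u2^3+u3^3+u4^3))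
      (by nlinarith [hdn] : (0:ℝ) ≤ 2*(u1^2+u2^2+u3^2+u4^2)*Real.sqrt ((u1^2+u2^2+u3^2+u4^2)/12) + (u1^3+u2^3+u3^3+u4^3)),
    ht, hq0, sq_nonneg (u1^2+u2^2+u3^2+u4^2)]
open Polynomial

private lemma monic_quad (x q : ℝ) : (X^2 - C x * X + C q).Monic := by
  have h : (X^2 - C x * X + C q : ℝ[X]) = X^2 + (C (-x) * X + C q) := by
    simp [C_neg]; ring
  rw [h]
  exact monic_X_pow_add (lt_of_le_of_lt (degree_linear_le) (by norm_num))

private lemma quad_factor (q : ℝ) (hq : 0 < q) (P : ℝ[X]) (hm : P.Monic)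
    (hd : 0 < P.natDegree)
    (hw : ∀ z : ℂ, aeval z P = 0 → ‖z‖ = Real.sqrt q)
    (hnr : ∀ t : ℝ, P.eval t ≠ 0) :
    ∃ x : ℝ, x^2 < 4*q ∧ (X^2 - C x * X + C q) ∣ P := by
  set Pc := P.map (algebraMap ℝ ℂ) with hPc
  have hdc : 0 < Pc.degree := by
    rw [hPc, degree_map_eq_of_injective (algebraMap ℝ ℂ).injective]
    exact natDegree_pos_iff_degree_pos.mp hd
  obtain ⟨z, hz⟩ := Complex.exists_root hdc
  have hzP : aeval z P = 0 := by rwa [aeval_def, ← eval_map]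
  have hconj : aeval (starRingEnd ℂ z) P = 0 := by
    rw [Polynomial.aeval_conj, hzP, map_zero]
  have him : z.im ≠ 0 := by
    intro h0
    have hzre : z = ((z.re : ℝ) : ℂ) := Complex.ext rfl (by simp [h0])
    rw [hzre] at hzP
    rw [show ((z.re : ℝ) : ℂ) = (RCLike.ofReal z.re : ℂ) from rfl, Polynomial.aeval_ofReal] at hzP
    exact hnr z.re (Complex.ofReal_eq_zero.mp hzP)
  have habs : ‖z‖ = Real.sqrt q := hw z hzP
  have hnormSq : Complex.normSq z = q := by
    have h := congrArg (· ^ 2) habs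
    simp only [Complex.sq_norm] at h
    rwa [Real.sq_sqrt hq.le] at h
  have him2 : 0 < z.im ^ 2 := by
    rcases lt_or_gt_of_ne him with h | h <;> nlinarith
  refine ⟨2 * z.re, ?_, ?_⟩
  · have h1 : z.re^2 < Complex.normSq z := by
      rw [Complex.normSq_apply]; nlinarith
    nlinarith [h1, hnormSq]
  · have hzne : (starRingEnd ℂ) z ≠ z := fun h => him (Complex.conj_eq_iff_im.mp h)
    have hzc : (X - C z) ∣ Pc := dvd_iff_isRoot.mpr hz
    obtain ⟨R, hR⟩ := hzc
    have hconj' : Pc.IsRoot (starRingEnd ℂ z) := by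
      rw [IsRoot, eval_map, ← aeval_def]; exact hconj
    have hroot : R.IsRoot (starRingEnd ℂ z) := by
      have h := hconj'
      rw [hR] at h
      simp only [IsRoot, eval_mul, eval_sub, eval_X, eval_C] at h
      rcases mul_eq_zero.mp h with h' | h'
      · exact absurd (sub_eq_zero.mp h') hzne
      · exact h'
    obtain ⟨S, hS⟩ := dvd_iff_isRoot.mpr hroot
    have hdvdC : ((X^2 - C (2*z.re) * X + C q : ℝ[X]).map (algebraMap ℝ ℂ)) ∣ Pc := by
      have hquad : (X^2 - C (2*z.re) * X + C q : ℝ[X]).map (algebraMap ℝ ℂ)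
          = (X - C z) * (X - C (starRingEnd ℂ z)) := by
        have h1 : ((2*z.re : ℝ) : ℂ) = z + starRingEnd ℂ z := by
          rw [Complex.add_conj]
        have h2 : ((q : ℝ) : ℂ) = z * starRingEnd ℂ z := by
          rw [Complex.mul_conj, hnormSq]
        simp only [Polynomial.map_add, Polynomial.map_sub, Polynomial.map_mul,
          Polynomial.map_pow, map_X, map_C]
        rw [show (algebraMap ℝ ℂ) (2*z.re) = z + starRingEnd ℂ z from h1,
          show (algebraMap ℝ ℂ) q = z * starRingEnd ℂ z from h2]
        simp only [C_add, C_mul]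
        ring
      rw [hquad, hR, hS]
      exact ⟨S, by ring⟩
    exact (map_dvd_map' (algebraMap ℝ ℂ)).mp hdvdC

private lemma quad_step (q : ℝ) (hq : 0 < q) (P : ℝ[X]) (hm : P.Monic)
    (hd : 0 < P.natDegree)
    (hw : ∀ z : ℂ, aeval z P = 0 → ‖z‖ = Real.sqrt q)
    (hnr : ∀ t : ℝ, P.eval t ≠ 0) :
    ∃ (x : ℝ) (Q : ℝ[X]), x^2 < 4*q ∧ Q.Monic ∧ Q.natDegree + 2 = P.natDegree ∧
      (∀ t : ℝ, Q.eval t ≠ 0) ∧ (∀ z : ℂ, aeval z Q = 0 → ‖z‖ = Real.sqrt q) ∧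
      P = (X^2 - C x * X + C q) * Q := by
  obtain ⟨x, hx, hdvd⟩ := quad_factor q hq P hm hd hw hnr
  obtain ⟨Q, hQ⟩ := hdvd
  have hDm : (X^2 - C x * X + C q).Monic := monic_quad x q
  have hQm : Q.Monic := hDm.of_mul_monic_left (hQ ▸ hm)
  have hDdeg : (X^2 - C x * X + C q : ℝ[X]).natDegree = 2 := by
    compute_degree!
  have hdeg : Q.natDegree + 2 = P.natDegree := by
    rw [hQ, natDegree_mul hDm.ne_zero hQm.ne_zero, hDdeg]; ring
  refine ⟨x, Q, hx, hQm, hdeg, ?_, ?_, hQ⟩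
  · intro t ht
    exact hnr t (by rw [hQ, eval_mul, ht, mul_zero])
  · intro z hz
    exact hw z (by rw [hQ, map_mul, hz, mul_zero])

set_option maxHeartbeats 1600000 in
theorem weil_octic_coeff_bounds_three_four (q a1 a2 a3 a4 : ℝ) (hq : 0 < q) (P : ℝ[X])
    (hP : P = X ^ 8 + C a1 * X ^ 7 + C a2 * X ^ 6 + C a3 * X ^ 5 + C a4 * X ^ 4
        + C (q * a3) * X ^ 3 + C (q ^ 2 * a2) * X ^ 2 + C (q ^ 3 * a1) * X
        + C (q ^ 4))
    (hweil : ∀ z : ℂ, aeval z P = 0 → ‖z‖ = Real.sqrt q)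
    (hnoreal : ∀ t : ℝ, P.eval t ≠ 0) :
    (-9 * q * a1 - 4 * Real.sqrt q * a2 - 16 * q * Real.sqrt q < a3 ∧
        a3 < -9 * q * a1 + 4 * Real.sqrt q * a2 + 16 * q * Real.sqrt q) ∧
      (-a1 ^ 3 / 8 + a1 * a2 / 2 + q * a1
          - ((2 / 3) * (3 * a1 ^ 2 / 8 - a2 + 4 * q)) ^ ((3 : ℝ) / 2) ≤ a3 ∧
        a3 ≤ -a1 ^ 3 / 8 + a1 * a2 / 2 + q * a1
          + ((2 / 3) * (3 * a1 ^ 2 / 8 - a2 + 4 * q)) ^ ((3 : ℝ) / 2)) := by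
  have hm : P.Monic := by
    rw [hP]; monicity!
  have hdeg : P.natDegree = 8 := by
    rw [hP]; compute_degree!
  obtain ⟨x1, Q1, hx1, hm1, hd1, hnr1, hw1, hf1⟩ :=
    quad_step q hq P hm (by omega) hweil hnoreal
  obtain ⟨x2, Q2, hx2, hm2, hd2, hnr2, hw2, hf2⟩ :=
    quad_step q hq Q1 hm1 (by omega) hw1 hnr1
  obtain ⟨x3, Q3, hx3, hm3, hd3, hnr3, hw3, hf3⟩ :=
    quad_step q hq Q2 hm2 (by omega) hw2 hnr2
  obtain ⟨x4, Q4, hx4, hm4, hd4, hnr4, hw4, hf4⟩ :=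
    quad_step q hq Q3 hm3 (by omega) hw3 hnr3
  have hQ4 : Q4 = 1 := hm4.natDegree_eq_zero.mp (by omega)
  rw [hQ4, mul_one] at hf4
  rw [hf4] at hf3; rw [hf3] at hf2; rw [hf2] at hf1
  -- expansion of the product
  have hexp : (X^2 - C x1 * X + C q) * ((X^2 - C x2 * X + C q) *
      ((X^2 - C x3 * X + C q) * (X^2 - C x4 * X + C q))) =
      (X ^ 8 : ℝ[X])
      + C (-(x1+x2+x3+x4)) * X ^ 7
      + C ((x1*x2+x1*x3+x1*x4+x2*x3+x2*x4+x3*x4) + (q+q+q+q)) * X ^ 6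
      + C (-(x1*x2*x3+x1*x2*x4+x1*x3*x4+x2*x3*x4) - (q+q+q)*(x1+x2+x3+x4)) * X ^ 5
      + C (x1*x2*x3*x4 + (q+q)*(x1*x2+x1*x3+x1*x4+x2*x3+x2*x4+x3*x4)
          + (q*q+q*q+q*q+q*q+q*q+q*q)) * X ^ 4
      + C (-(x1*x2*x3+x1*x2*x4+x1*x3*x4+x2*x3*x4)*q
          - (q*q+q*q+q*q)*(x1+x2+x3+x4)) * X ^ 3
      + C ((x1*x2+x1*x3+x1*x4+x2*x3+x2*x4+x3*x4)*(q*q)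
          + (q*q*q+q*q*q+q*q*q+q*q*q)) * X ^ 2
      + C (-(x1+x2+x3+x4)*(q*q*q)) * X
      + C (q*q*q*q) := by
    simp only [C_add, C_mul, C_neg, C_sub]
    ring
  have hco : (X ^ 8 : ℝ[X]) + C a1 * X ^ 7 + C a2 * X ^ 6 + C a3 * X ^ 5 + C a4 * X ^ 4
      + C (q * a3) * X ^ 3 + C (q ^ 2 * a2) * X ^ 2 + C (q ^ 3 * a1) * X + C (q ^ 4)
      = (X ^ 8 : ℝ[X])
      + C (-(x1+x2+x3+x4)) * X ^ 7
      + C ((x1*x2+x1*x3+x1*x4+x2*x3+x2*x4+x3*x4) + (q+q+q+q)) * X ^ 6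
      + C (-(x1*x2*x3+x1*x2*x4+x1*x3*x4+x2*x3*x4) - (q+q+q)*(x1+x2+x3+x4)) * X ^ 5
      + C (x1*x2*x3*x4 + (q+q)*(x1*x2+x1*x3+x1*x4+x2*x3+x2*x4+x3*x4)
          + (q*q+q*q+q*q+q*q+q*q+q*q)) * X ^ 4
      + C (-(x1*x2*x3+x1*x2*x4+x1*x3*x4+x2*x3*x4)*q
          - (q*q+q*q+q*q)*(x1+x2+x3+x4)) * X ^ 3
      + C ((x1*x2+x1*x3+x1*x4+x2*x3+x2*x4+x3*x4)*(q*q)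
          + (q*q*q+q*q*q+q*q*q+q*q*q)) * X ^ 2
      + C (-(x1+x2+x3+x4)*(q*q*q)) * X
      + C (q*q*q*q) := by
    rw [← hexp, ← hf1, hP]
  have ha1 : a1 = -(x1+x2+x3+x4) := by
    have h := congrArg (fun p => Polynomial.coeff p 7) hco
    simp only [coeff_add, coeff_C_mul, coeff_X_pow, coeff_C, coeff_X] at h
    norm_num at h
    linarith [h]
  have ha2 : a2 = (x1*x2+x1*x3+x1*x4+x2*x3+x2*x4+x3*x4) + (q+q+q+q) := by
    have h := congrArg (fun p => Polynomial.coeff p 6) hco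
    simp only [coeff_add, coeff_C_mul, coeff_X_pow, coeff_C, coeff_X] at h
    norm_num at h
    linarith [h]
  have ha3 : a3 = -(x1*x2*x3+x1*x2*x4+x1*x3*x4+x2*x3*x4) - (q+q+q)*(x1+x2+x3+x4) := by
    have h := congrArg (fun p => Polynomial.coeff p 5) hco
    simp only [coeff_add, coeff_C_mul, coeff_X_pow, coeff_C, coeff_X] at h
    norm_num at h
    linarith [h]
  clear hco hexp hf1 hP hweil hnoreal hm hdeg hm1 hd1 hnr1 hw1 hm2 hd2 hnr2 hw2 hm3 hd3 hnr3 hw3 hm4 hd4 hnr4 hw4 hQ4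
  clear hf2 hf3 hf4
  clear P Q1 Q2 Q3
  -- real-variable endgame
  have hs0 : 0 < Real.sqrt q := Real.sqrt_pos.mpr hq
  have hs2 : Real.sqrt q ^ 2 = q := Real.sq_sqrt hq.le
  set s := Real.sqrt q with hsdef
  have hb : ∀ x : ℝ, x^2 < 4*q → -(2*s) < x ∧ x < 2*s := by
    intro x hx
    constructor <;> nlinarith [hs2, hs0]
  obtain ⟨hl1, hr1⟩ := hb x1 hx1
  obtain ⟨hl2, hr2⟩ := hb x2 hx2
  obtain ⟨hl3, hr3⟩ := hb x3 hx3
  obtain ⟨hl4, hr4⟩ := hb x4 hx4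
  constructor
  · constructor
    · -- lower strict bound
      have hK : 0 < (2*s - x2)*((2*s - x3)*(2*s - x4)) + (2*s - x1)*((2*s - x3)*(2*s - x4))
          + (2*s - x1)*((2*s - x2)*(2*s - x4)) + (2*s - x1)*((2*s - x2)*(2*s - x3)) := by
        have t1 := mul_pos (by linarith : (0:ℝ) < 2*s - x2)
          (mul_pos (by linarith : (0:ℝ) < 2*s - x3) (by linarith : (0:ℝ) < 2*s - x4))
        have t2 := mul_pos (by linarith : (0:ℝ) < 2*s - x1)
          (mul_pos (by linarith : (0:ℝ) < 2*s - x3) (by linarith : (0:ℝ) < 2*s - x4))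
        have t3 := mul_pos (by linarith : (0:ℝ) < 2*s - x1)
          (mul_pos (by linarith : (0:ℝ) < 2*s - x2) (by linarith : (0:ℝ) < 2*s - x4))
        have t4 := mul_pos (by linarith : (0:ℝ) < 2*s - x1)
          (mul_pos (by linarith : (0:ℝ) < 2*s - x2) (by linarith : (0:ℝ) < 2*s - x3))
        linarith
      have hid : a3 - (-9 * q * a1 - 4 * s * a2 - 16 * q * s)
          = (2*s - x2)*((2*s - x3)*(2*s - x4)) + (2*s - x1)*((2*s - x3)*(2*s - x4))
          + (2*s - x1)*((2*s - x2)*(2*s - x4)) + (2*s - x1)*((2*s - x2)*(2*s - x3)) := by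
        rw [ha1, ha2, ha3, ← hs2]; ring
      linarith
    · -- upper strict bound
      have hK : 0 < (2*s + x2)*((2*s + x3)*(2*s + x4)) + (2*s + x1)*((2*s + x3)*(2*s + x4))
          + (2*s + x1)*((2*s + x2)*(2*s + x4)) + (2*s + x1)*((2*s + x2)*(2*s + x3)) := by
        have t1 := mul_pos (by linarith : (0:ℝ) < 2*s + x2)
          (mul_pos (by linarith : (0:ℝ) < 2*s + x3) (by linarith : (0:ℝ) < 2*s + x4))
        have t2 := mul_pos (by linarith : (0:ℝ) < 2*s + x1)
          (mul_pos (by linarith : (0:ℝ) < 2*s + x3) (by linarith : (0:ℝ) < 2*s + x4))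
        have t3 := mul_pos (by linarith : (0:ℝ) < 2*s + x1)
          (mul_pos (by linarith : (0:ℝ) < 2*s + x2) (by linarith : (0:ℝ) < 2*s + x4))
        have t4 := mul_pos (by linarith : (0:ℝ) < 2*s + x1)
          (mul_pos (by linarith : (0:ℝ) < 2*s + x2) (by linarith : (0:ℝ) < 2*s + x3))
        linarith
      have hid : (-9 * q * a1 + 4 * s * a2 + 16 * q * s) - a3
          = (2*s + x2)*((2*s + x3)*(2*s + x4)) + (2*s + x1)*((2*s + x3)*(2*s + x4))
          + (2*s + x1)*((2*s + x2)*(2*s + x4)) + (2*s + x1)*((2*s + x2)*(2*s + x3)) := by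
        rw [ha1, ha2, ha3, ← hs2]; ring
      linarith
  · -- part (4)
    have key := cube_sum_bound (x1 - (x1+x2+x3+x4)/4) (x2 - (x1+x2+x3+x4)/4)
      (x3 - (x1+x2+x3+x4)/4) (x4 - (x1+x2+x3+x4)/4) (by ring)
    have hMeq : a3 - (-a1 ^ 3 / 8 + a1 * a2 / 2 + q * a1)
        = -((x1 - (x1+x2+x3+x4)/4)^3 + (x2 - (x1+x2+x3+x4)/4)^3
          + (x3 - (x1+x2+x3+x4)/4)^3 + (x4 - (x1+x2+x3+x4)/4)^3)/3 := by
      rw [ha1, ha2, ha3]; ring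
    have hTeq : (2 / 3) * (3 * a1 ^ 2 / 8 - a2 + 4 * q)
        = ((x1 - (x1+x2+x3+x4)/4)^2 + (x2 - (x1+x2+x3+x4)/4)^2
          + (x3 - (x1+x2+x3+x4)/4)^2 + (x4 - (x1+x2+x3+x4)/4)^2)/3 := by
      rw [ha1, ha2]; ring
    have hT0 : 0 ≤ (2 / 3) * (3 * a1 ^ 2 / 8 - a2 + 4 * q) := by
      rw [hTeq]; positivity
    have hsq : (a3 - (-a1 ^ 3 / 8 + a1 * a2 / 2 + q * a1))^2
        ≤ ((2 / 3) * (3 * a1 ^ 2 / 8 - a2 + 4 * q))^3 := by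
      rw [hMeq, hTeq]
      nlinarith [key]
    have habs := Real.abs_le_sqrt hsq
    have hpow : ((2 / 3) * (3 * a1 ^ 2 / 8 - a2 + 4 * q)) ^ ((3:ℝ)/2)
        = Real.sqrt (((2 / 3) * (3 * a1 ^ 2 / 8 - a2 + 4 * q))^3) := by
      rw [Real.sqrt_eq_rpow, ← Real.rpow_natCast ((2 / 3) * (3 * a1 ^ 2 / 8 - a2 + 4 * q)) 3,
        ← Real.rpow_mul hT0]
      norm_num
    rw [← hpow] at habs
    have h1 := abs_le.mp habs
    exact ⟨by linarith [h1.1], by linarith [h1.2]⟩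
end

section
/- Let p(t) = t^8 + a1 t^7 + ... + q^4 be a Weil polynomial (q > 0) with no real roots. Then 2√q|q a1 + a3| - 2q a2 - 2q² < a4. -/
open Polynomial

theorem weil_octic_coeff_bound_five (q a1 a2 a3 a4 : ℝ) (hq : 0 < q) (P : ℝ[X])
    (hP : P = X ^ 8 + C a1 * X ^ 7 + C a2 * X ^ 6 + C a3 * X ^ 5 + C a4 * X ^ 4
        + C (q * a3) * X ^ 3 + C (q ^ 2 * a2) * X ^ 2 + C (q ^ 3 * a1) * X
        + C (q ^ 4))
    (hweil : ∀ z : ℂ, aeval z P = 0 → ‖z‖ = Real.sqrt q)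
    (hnoreal : ∀ t : ℝ, P.eval t ≠ 0) :
    2 * Real.sqrt q * |q * a1 + a3| - 2 * q * a2 - 2 * q ^ 2 < a4 := by
  have h0 : 0 < P.eval 0 := by
    simp only [hP, eval_add, eval_mul, eval_pow, eval_X, eval_C]
    have : (0:ℝ)^8 + a1 * 0^7 + a2 * 0^6 + a3 * 0^5 + a4 * 0^4 + q*a3*0^3
        + q^2*a2*0^2 + q^3*a1*0 + q^4 = q^4 := by ring
    rw [this]; positivity
  have hcont : Continuous fun t : ℝ => P.eval t := P.continuous
  have key : ∀ t : ℝ, 0 < P.eval t := by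
    intro t
    rcases lt_trichotomy (P.eval t) 0 with h | h | h
    · exfalso
      have hmem : (0:ℝ) ∈ Set.uIcc (P.eval t) (P.eval 0) :=
        Set.mem_uIcc.2 (Or.inl ⟨h.le, h0.le⟩)
      obtain ⟨c, _, hc⟩ := intermediate_value_uIcc (hcont.continuousOn (s := Set.uIcc t 0)) hmem
      exact hnoreal c hc
    · exact absurd h (hnoreal t)
    · exact h
  set s := Real.sqrt q with hsdef
  have hs0 : 0 < s := Real.sqrt_pos.2 hq
  have hs : s ^ 2 = q := Real.sq_sqrt hq.le
  have h1 : 0 < P.eval s := key s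
  have h2 : 0 < P.eval (-s) := key (-s)
  rw [hP] at h1 h2
  simp only [eval_add, eval_mul, eval_pow, eval_X, eval_C] at h1 h2
  rw [← hs] at h1 h2 ⊢
  have hs4 : 0 < s ^ 4 := by positivity
  rcases abs_cases (s ^ 2 * a1 + a3) with ⟨ha, _⟩ | ⟨ha, _⟩ <;> rw [ha] <;>
    nlinarith [h1, h2, hs4, mul_pos hs4 hs0]
end
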